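/- For the system u̇ = (u+1)² − 4au²(u−1) + (1−3u)v, v̇ = 2(u+1)(3 + u + 2au − au²) + (1 + 4au + u − 6au²)v − 5v², the curve f(u,v) = v² + 4au²(u−1) − (u+1)² = 0 is invariant with cofactor k(u,v) = 2(1 + u + 4au − 6au² − 5v); that is, P·f_u + Q·f_v = k·f identically in (u,v), for every real a. -/

import Mathlib

/-- For the transformed Chavarriga system
`u̇ = (u+1)² − 4au²(u−1) + (1−3u)v`,
`v̇ = 2(u+1)(3 + u + 2au − au²) + (1 + 4au + u − 6au²)v − 5v²`, the curve
`f(u,v) = v² + 4au²(u−1) − (u+1)²` is invariant with cofactor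
`k(u,v) = 2(1 + u + 4au − 6au² − 5v)`, for every real `a`. -/
theorem stmt_13 (a : ℝ)
    (P Q f k : ℝ × ℝ → ℝ)
    (hP : ∀ p : ℝ × ℝ, P p = (p.1 + 1) ^ 2 - 4 * a * p.1 ^ 2 * (p.1 - 1)
      + (1 - 3 * p.1) * p.2)
    (hQ : ∀ p : ℝ × ℝ, Q p = 2 * (p.1 + 1) * (3 + p.1 + 2 * a * p.1 - a * p.1 ^ 2)
      + (1 + 4 * a * p.1 + p.1 - 6 * a * p.1 ^ 2) * p.2 - 5 * p.2 ^ 2)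
    (hf : ∀ p : ℝ × ℝ, f p = p.2 ^ 2 + 4 * a * p.1 ^ 2 * (p.1 - 1) - (p.1 + 1) ^ 2)
    (hk : ∀ p : ℝ × ℝ, k p = 2 * (1 + p.1 + 4 * a * p.1 - 6 * a * p.1 ^ 2
      - 5 * p.2)) :
    ∀ p : ℝ × ℝ, P p * fderiv ℝ f p (1, 0) + Q p * fderiv ℝ f p (0, 1)
      = k p * f p := by
  intro p
  have hfe : f = fun q : ℝ × ℝ =>
      q.2 * q.2 + 4 * a * (q.1 * q.1) * (q.1 - 1) - (q.1 + 1) * (q.1 + 1) :=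
    funext fun q => by rw [hf]; ring
  have h1 : HasFDerivAt (fun q : ℝ × ℝ => q.1)
      (ContinuousLinearMap.fst ℝ ℝ ℝ) p := hasFDerivAt_fst
  have h2 : HasFDerivAt (fun q : ℝ × ℝ => q.2)
      (ContinuousLinearMap.snd ℝ ℝ ℝ) p := hasFDerivAt_snd
  have hd : HasFDerivAt f
      ((12 * a * p.1 ^ 2 - 8 * a * p.1 - (2 * p.1 + 2)) •
        ContinuousLinearMap.fst ℝ ℝ ℝ +
       (2 * p.2) • ContinuousLinearMap.snd ℝ ℝ ℝ) p := by
    rw [hfe]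
    have := ((h2.mul h2).add
      (((h1.mul h1).const_mul (4 * a)).mul (h1.sub_const 1))).sub
      ((h1.add_const 1).mul (h1.add_const 1))
    convert this using 1
    iterate 6 rfl
    apply ContinuousLinearMap.ext
    intro x
    simp [ContinuousLinearMap.smul_apply]
    ring
  rw [hd.fderiv, hP p, hQ p, hf p, hk p]
  simp [ContinuousLinearMap.smul_apply]
  ring
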